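/- arXiv:2002.11941 — 2 statements merged into one kernel-verified Lean document; each statement's English description precedes it below -/
import Mathlib

section
/- Let K be a number field, η ∈ O_K^× a unit, n ≥ 1 an integer, and π a prime ideal of O_K such that the π-adic valuation of η^n − 1 equals exactly 1 (i.e., π divides η^n − 1 but π² does not). Then π is a non-Wieferich prime with respect to η, i.e., η^(N(π)−1) ≡ 1 (mod π) and η^(N(π)−1) ≢ 1 (mod π²). -/
open NumberField

/-- A prime ideal `π` of `𝓞 K` is a non-Wieferich prime with respect to a unit `η` if
`η^(N(π)-1) ≡ 1 (mod π)` and `η^(N(π)-1) ≢ 1 (mod π²)`. -/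
def IsNonWieferich {K : Type*} [Field K] [NumberField K] (η : (𝓞 K)ˣ) (π : Ideal (𝓞 K)) : Prop :=
  (η : 𝓞 K) ^ (Ideal.absNorm π - 1) - 1 ∈ π ∧
  (η : 𝓞 K) ^ (Ideal.absNorm π - 1) - 1 ∉ π ^ 2

set_option maxHeartbeats 1000000 in
set_option synthInstance.maxHeartbeats 400000 in
private lemma aux_card_units {R : Type*} [CommRing R] (I : Ideal R) [I.IsMaximal]
    [Fintype (R ⧸ I)] :
    Nat.card (R ⧸ I)ˣ = Fintype.card (R ⧸ I) - 1 ∧ ((Fintype.card (R ⧸ I) : R ⧸ I)) = 0 := by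
  letI : Field (R ⧸ I) := Ideal.Quotient.field I
  exact ⟨by rw [Nat.card_units, Nat.card_eq_fintype_card], FiniteField.cast_card_eq_zero _⟩

set_option maxHeartbeats 1000000 in
set_option synthInstance.maxHeartbeats 400000 in
/-- Let `K` be a number field, `η` a unit of `𝓞 K`, `n ≥ 1`, and `π` a prime ideal of `𝓞 K`
such that `v_π(η^n − 1) = 1`, that is, `π` divides `η^n − 1` but `π²` does not.  Then `π` is a
non-Wieferich prime with respect to `η`. -/
theorem isNonWieferich_of_val_one (K : Type*) [Field K] [NumberField K] (η : (𝓞 K)ˣ)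
    (n : ℕ) (hn : 1 ≤ n) (π : Ideal (𝓞 K)) (hπp : π.IsPrime) (hπb : π ≠ ⊥)
    (h1 : (η : 𝓞 K) ^ n - 1 ∈ π) (h2 : (η : 𝓞 K) ^ n - 1 ∉ π ^ 2) :
    IsNonWieferich η π := by
  classical
  haveI : Fintype (𝓞 K ⧸ π) := @Fintype.ofFinite _ (Ideal.finiteQuotientOfFreeOfNeBot π hπb)
  haveI : π.IsMaximal := hπp.isMaximal hπb
  set q := Ideal.absNorm π with hq
  have hqcard : q = Fintype.card (𝓞 K ⧸ π) := by
    rw [hq, Ideal.absNorm_apply, Submodule.cardQuot_apply, Nat.card_eq_fintype_card]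
  set f := Ideal.Quotient.mk π with hf
  set ηb : ((𝓞 K ⧸ π))ˣ := Units.map f.toMonoidHom η with hηb
  have hcoe : (ηb : 𝓞 K ⧸ π) = f (η : 𝓞 K) := rfl
  set d := orderOf ηb with hdd
  -- d divides n
  have hηn : ηb ^ n = 1 := by
    ext
    rw [Units.val_pow_eq_pow_val, hcoe, ← map_pow, Units.val_one]
    have := (Ideal.Quotient.eq_zero_iff_mem).2 h1
    rw [map_sub, map_one, sub_eq_zero] at this
    exact this
  have hdn : d ∣ n := orderOf_dvd_of_pow_eq_one hηn
  have hd0 : d ≠ 0 := by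
    rintro h0
    rw [h0] at hdn
    omega
  -- d divides q - 1
  have hdq : d ∣ q - 1 := by
    have := orderOf_dvd_natCard ηb
    rwa [(aux_card_units π).1, ← hqcard] at this
  -- η^d - 1 ∈ π
  have hπd : (η : 𝓞 K) ^ d - 1 ∈ π := by
    rw [← Ideal.Quotient.eq_zero_iff_mem, map_sub, map_one, sub_eq_zero, map_pow]
    have : (ηb ^ d : (𝓞 K ⧸ π)ˣ) = 1 := pow_orderOf_eq_one ηb
    calc (f (η : 𝓞 K)) ^ d = ((ηb ^ d : (𝓞 K ⧸ π)ˣ) : 𝓞 K ⧸ π) := by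
          rw [Units.val_pow_eq_pow_val, hcoe]
      _ = 1 := by rw [this, Units.val_one]
  -- η^d - 1 ∉ π²
  have hπd2 : (η : 𝓞 K) ^ d - 1 ∉ π ^ 2 := by
    intro hmem
    obtain ⟨m, hm⟩ := hdn
    apply h2
    have hdvd : (η : 𝓞 K) ^ d - 1 ∣ (η : 𝓞 K) ^ n - 1 := by
      have := sub_dvd_pow_sub_pow ((η : 𝓞 K) ^ d) 1 m
      rwa [one_pow, ← pow_mul, ← hm] at this
    obtain ⟨c, hc⟩ := hdvd
    rw [hc]
    exact Ideal.mul_mem_right _ _ hmem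
  obtain ⟨k, hk⟩ := hdq
  set x : 𝓞 K := (η : 𝓞 K) ^ d with hx
  set S : 𝓞 K := ∑ i ∈ Finset.range k, x ^ i with hS
  have hgeom : S * (x - 1) = x ^ k - 1 := geom_sum_mul x k
  have hxk : x ^ k = (η : 𝓞 K) ^ (q - 1) := by
    rw [hx, ← pow_mul, ← hk]
  have hkey : (η : 𝓞 K) ^ (q - 1) - 1 = S * ((η : 𝓞 K) ^ d - 1) := by
    rw [← hx, ← hxk, ← hgeom]
  -- S ∉ π
  have hSπ : S ∉ π := by
    intro hmem
    have hfS : f S = (k : 𝓞 K ⧸ π) := by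
      rw [hS, map_sum]
      have hx1 : f x = 1 := by
        rw [hx, map_pow]
        have : (ηb ^ d : (𝓞 K ⧸ π)ˣ) = 1 := pow_orderOf_eq_one ηb
        calc (f (η : 𝓞 K)) ^ d = ((ηb ^ d : (𝓞 K ⧸ π)ˣ) : 𝓞 K ⧸ π) := by
              rw [Units.val_pow_eq_pow_val, hcoe]
          _ = 1 := by rw [this, Units.val_one]
      simp [map_pow, hx1]
    have hk0 : ((k : ℕ) : 𝓞 K ⧸ π) = 0 := by
      rw [← hfS]
      exact Ideal.Quotient.eq_zero_iff_mem.2 hmem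
    have hq1 : (((q - 1 : ℕ)) : 𝓞 K ⧸ π) = 0 := by
      rw [hk, Nat.cast_mul, hk0, mul_zero]
    have hq1' : (((q - 1 : ℕ)) : 𝓞 K ⧸ π) = -1 := by
      have hqpos : 1 ≤ q := by
        rw [hqcard]; exact Fintype.card_pos
      rw [Nat.cast_sub hqpos, Nat.cast_one, hqcard, (aux_card_units π).2, zero_sub]
    rw [hq1'] at hq1
    exact one_ne_zero (neg_eq_zero.mp hq1)
  constructor
  · rw [← hq, hkey]
    exact Ideal.mul_mem_left _ _ hπd
  · rw [← hq, hkey]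
    intro hmem
    apply hπd2
    have hprime : Prime π := Ideal.prime_of_isPrime hπb hπp
    have hdvd2 : π ^ 2 ∣ Ideal.span {S} * Ideal.span {(η : 𝓞 K) ^ d - 1} := by
      rw [Ideal.span_singleton_mul_span_singleton]
      exact Ideal.dvd_span_singleton.2 hmem
    have hnd : ¬ π ∣ Ideal.span {S} := fun h => hSπ (Ideal.dvd_span_singleton.1 h)
    have := hprime.pow_dvd_of_dvd_mul_left 2 hnd hdvd2
    exact Ideal.dvd_span_singleton.1 this
end

section
/- Let K be a number field of degree d = [K:ℚ] and let η ∈ O_K^× be a unit which is not a root of unity. For n ≥ 1, let U'_n denote the squarefree part of the ideal (Φ_n(η)) of O_K, i.e., the product of those prime ideals π with v_π(Φ_n(η)) = 1, where Φ_n is the n-th cyclotomic polynomial. Then for every x > 0, the number of prime ideals π of O_K with N(π) ≤ x that are non-Wieferich primes with respect to η is at least the number of integers n ≥ 1 such that |N_{K/ℚ}(Φ_n(η))| ≤ x and N(U'_n) > n^d. -/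
set_option synthInstance.maxHeartbeats 1000000
set_option maxHeartbeats 1000000


open NumberField UniqueFactorizationMonoid

open scoped Classical in
/-- The squarefree part of a nonzero ideal `I` of `𝓞 K`: the product of those prime ideals `π`
appearing with multiplicity exactly `1` in the prime factorization of `I`. -/
noncomputable def squarefreePart {K : Type*} [Field K] [NumberField K] (I : Ideal (𝓞 K)) :
    Ideal (𝓞 K) :=
  ∏ π ∈ (normalizedFactors I).toFinset.filter (fun π => (normalizedFactors I).count π = 1), π

section Aux

open Polynomial Ideal

variable {K : Type*} [Field K] [NumberField K]

/-- Auxiliary predicate: a "good" prime for `η` at level `n`. -/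
def GoodPrime (η : (𝓞 K)ˣ) (n : ℕ) (π : Ideal (𝓞 K)) : Prop :=
  π.IsPrime ∧ π ≠ ⊥ ∧ (cyclotomic n (𝓞 K)).eval (η : 𝓞 K) ∈ π ∧
    (cyclotomic n (𝓞 K)).eval (η : 𝓞 K) ∉ π ^ 2 ∧ (n : 𝓞 K) ∉ π

lemma mk_cyclotomic_eval (π : Ideal (𝓞 K)) (m : ℕ) (a : 𝓞 K) :
    Ideal.Quotient.mk π ((cyclotomic m (𝓞 K)).eval a) =
      (cyclotomic m (𝓞 K ⧸ π)).eval (Ideal.Quotient.mk π a) := by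
  rw [← map_cyclotomic m (Ideal.Quotient.mk π), eval_map, eval₂_at_apply]

lemma orderOf_eq_of_root {π : Ideal (𝓞 K)} [π.IsMaximal] {m : ℕ} {a : 𝓞 K}
    (hmem : (cyclotomic m (𝓞 K)).eval a ∈ π) (hm : (m : 𝓞 K ⧸ π) ≠ 0) :
    orderOf (Ideal.Quotient.mk π a) = m := by
  letI : Field (𝓞 K ⧸ π) := Ideal.Quotient.field π
  haveI : NeZero ((m : ℕ) : 𝓞 K ⧸ π) := ⟨hm⟩
  have hroot : IsRoot (cyclotomic m (𝓞 K ⧸ π)) (Ideal.Quotient.mk π a) := by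
    rw [IsRoot, ← mk_cyclotomic_eval, Ideal.Quotient.eq_zero_iff_mem]
    exact hmem
  exact ((isRoot_cyclotomic_iff).mp hroot).eq_orderOf.symm

lemma cyclotomic_eval_ne_zero (η : (𝓞 K)ˣ) (hη : ∀ m : ℕ, 0 < m → (η : 𝓞 K) ^ m ≠ 1)
    {n : ℕ} (hn : 0 < n) : (cyclotomic n (𝓞 K)).eval (η : 𝓞 K) ≠ 0 := by
  intro h
  have hdvd : (cyclotomic n (𝓞 K)).eval (η : 𝓞 K) ∣ (X ^ n - 1 : (𝓞 K)[X]).eval (η : 𝓞 K) :=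
    eval_dvd (cyclotomic.dvd_X_pow_sub_one n (𝓞 K))
  rw [h, zero_dvd_iff, eval_sub, eval_pow, eval_X, eval_one, sub_eq_zero] at hdvd
  exact hη n hn hdvd

lemma goodPrime_orderOf {η : (𝓞 K)ˣ} {n : ℕ} {π : Ideal (𝓞 K)} (h : GoodPrime η n π) :
    orderOf (Ideal.Quotient.mk π (η : 𝓞 K)) = n := by
  obtain ⟨hp, hbot, hmem, -, hnmem⟩ := h
  haveI : π.IsMaximal := hp.isMaximal hbot
  refine orderOf_eq_of_root hmem ?_
  rw [← map_natCast (Ideal.Quotient.mk π), Ne, Ideal.Quotient.eq_zero_iff_mem]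
  exact hnmem

lemma goodPrime_spec (η : (𝓞 K)ˣ) (hη : ∀ m : ℕ, 0 < m → (η : 𝓞 K) ^ m ≠ 1)
    {n : ℕ} (hn : 0 < n) {π : Ideal (𝓞 K)} (h : GoodPrime η n π) :
    IsNonWieferich η π ∧
      Ideal.absNorm π ∣ Ideal.absNorm (span {(cyclotomic n (𝓞 K)).eval (η : 𝓞 K)}) := by
  obtain ⟨hp, hbot, hmem, hmem2, hnmem⟩ := h
  haveI : π.IsMaximal := hp.isMaximal hbot
  letI : Field (𝓞 K ⧸ π) := Ideal.Quotient.field π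
  haveI : Fintype (𝓞 K ⧸ π) := (haveI := Ideal.finiteQuotientOfFreeOfNeBot π hbot; Fintype.ofFinite _)
  set q := Ideal.absNorm π with hqdef
  have hq : q = Fintype.card (𝓞 K ⧸ π) := by
    rw [hqdef, Ideal.absNorm_apply, Submodule.cardQuot_apply, Nat.card_eq_fintype_card]
  have hμ0 : Ideal.Quotient.mk π (η : 𝓞 K) ≠ 0 := by
    intro h0
    have hηπ : (η : 𝓞 K) ∈ π := Ideal.Quotient.eq_zero_iff_mem.mp h0
    have hone : (1 : 𝓞 K) ∈ π := by
      have := π.mul_mem_right ((η⁻¹ : (𝓞 K)ˣ) : 𝓞 K) hηπ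
      rwa [η.mul_inv] at this
    exact hp.ne_top ((Ideal.eq_top_iff_one π).mpr hone)
  have hpow : (Ideal.Quotient.mk π (η : 𝓞 K)) ^ (q - 1) = 1 := by
    rw [hq]; exact FiniteField.pow_card_sub_one_eq_one _ hμ0
  have horder : orderOf (Ideal.Quotient.mk π (η : 𝓞 K)) = n :=
    goodPrime_orderOf ⟨hp, hbot, hmem, hmem2, hnmem⟩
  have hndvd : n ∣ q - 1 := horder ▸ orderOf_dvd_of_pow_eq_one hpow
  obtain ⟨k, hk⟩ := hndvd
  have hq1 : 1 ≤ q := hq ▸ Fintype.card_pos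
  set S : 𝓞 K := ∑ i ∈ Finset.range k, ((η : 𝓞 K) ^ n) ^ i with hSdef
  set T : 𝓞 K := ∏ d ∈ n.properDivisors, (cyclotomic d (𝓞 K)).eval (η : 𝓞 K) with hTdef
  have e1 : (η : 𝓞 K) ^ n - 1 = (cyclotomic n (𝓞 K)).eval (η : 𝓞 K) * T := by
    have h₀ := congrArg (Polynomial.eval (η : 𝓞 K))
      (prod_cyclotomic_eq_X_pow_sub_one hn (𝓞 K))
    rw [eval_prod, eval_sub, eval_pow, eval_X, eval_one,
      ← Nat.insert_self_properDivisors hn.ne',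
      Finset.prod_insert Nat.self_notMem_properDivisors] at h₀
    exact h₀.symm
  have e2 : (η : 𝓞 K) ^ (q - 1) - 1 = S * ((η : 𝓞 K) ^ n - 1) := by
    rw [hk, pow_mul]
    exact (geom_sum_mul _ _).symm
  have efact : (η : 𝓞 K) ^ (q - 1) - 1 =
      (cyclotomic n (𝓞 K)).eval (η : 𝓞 K) * (T * S) := by
    rw [e2, e1]; ring
  have hcard0 : ((q : ℕ) : 𝓞 K ⧸ π) = 0 := by
    rw [hq]; exact FiniteField.cast_card_eq_zero _
  have hμn : (Ideal.Quotient.mk π (η : 𝓞 K)) ^ n = 1 :=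
    horder ▸ pow_orderOf_eq_one _
  -- S ∉ π
  have hS : S ∉ π := by
    intro hSmem
    have hmkS : Ideal.Quotient.mk π S = (k : 𝓞 K ⧸ π) := by
      rw [hSdef, map_sum]
      simp only [map_pow, hμn, one_pow]
      simp
    have hk0 : (k : 𝓞 K ⧸ π) = 0 := by
      rw [← hmkS, Ideal.Quotient.eq_zero_iff_mem]; exact hSmem
    have hcst : ((q - 1 : ℕ) : 𝓞 K ⧸ π) = -1 := by
      rw [Nat.cast_sub hq1, hcard0, Nat.cast_one, zero_sub]
    rw [hk, Nat.cast_mul, hk0, mul_zero] at hcst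
    exact one_ne_zero (neg_eq_zero.mp hcst.symm)
  -- T ∉ π
  have hnF : ((n : ℕ) : 𝓞 K ⧸ π) ≠ 0 := by
    rw [← map_natCast (Ideal.Quotient.mk π), Ne, Ideal.Quotient.eq_zero_iff_mem]
    exact hnmem
  have hT : T ∉ π := by
    intro hTmem
    have hmkT : (∏ d ∈ n.properDivisors, Ideal.Quotient.mk π
        ((cyclotomic d (𝓞 K)).eval (η : 𝓞 K))) = 0 := by
      rw [← map_prod, ← hTdef, Ideal.Quotient.eq_zero_iff_mem]; exact hTmem
    obtain ⟨d, hd, hdzero⟩ := Finset.prod_eq_zero_iff.mp hmkT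
    obtain ⟨hddvd, hdlt⟩ := Nat.mem_properDivisors.mp hd
    have hdF : ((d : ℕ) : 𝓞 K ⧸ π) ≠ 0 := by
      obtain ⟨c, hc⟩ := hddvd
      intro h0
      apply hnF
      rw [hc, Nat.cast_mul, h0, zero_mul]
    have hod : orderOf (Ideal.Quotient.mk π (η : 𝓞 K)) = d := orderOf_eq_of_root
      (by rwa [← Ideal.Quotient.eq_zero_iff_mem]) hdF
    rw [horder] at hod
    exact absurd hod.symm hdlt.ne
  have hTS : T * S ∉ π := fun hmemTS => (hp.mem_or_mem hmemTS).elim hT hS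
  have hπprime : Prime π := Ideal.prime_of_isPrime hbot hp
  constructor
  · constructor
    · rw [← Ideal.Quotient.eq_zero_iff_mem, map_sub, map_pow, map_one, hpow, sub_self]
    · intro habs
      rw [efact] at habs
      have hdvd2 : π ^ 2 ∣ span {(cyclotomic n (𝓞 K)).eval (η : 𝓞 K)} * span {T * S} := by
        rw [Ideal.span_singleton_mul_span_singleton, Ideal.dvd_iff_le,
          Ideal.span_singleton_le_iff_mem]
        exact habs
      have hnd : ¬ π ∣ span {T * S} := by
        intro hd
        exact hTS ((Ideal.le_of_dvd hd) (Ideal.mem_span_singleton_self _))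
      have := hπprime.pow_dvd_of_dvd_mul_right 2 hnd hdvd2
      exact hmem2 ((Ideal.le_of_dvd this) (Ideal.mem_span_singleton_self _))
  · exact Ideal.absNorm_dvd_absNorm_of_le ((Ideal.span_singleton_le_iff_mem _).mpr hmem)

open scoped Classical in
lemma exists_goodPrime (η : (𝓞 K)ˣ) (hη : ∀ m : ℕ, 0 < m → (η : 𝓞 K) ^ m ≠ 1)
    {n : ℕ} (hn : 0 < n)
    (hlt : n ^ Module.finrank ℚ K <
      Ideal.absNorm (squarefreePart (span {(cyclotomic n (𝓞 K)).eval (η : 𝓞 K)}))) :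
    ∃ π, GoodPrime η n π := by
  set J : Ideal (𝓞 K) := span {(cyclotomic n (𝓞 K)).eval (η : 𝓞 K)} with hJdef
  have hΦ0 : (cyclotomic n (𝓞 K)).eval (η : 𝓞 K) ≠ 0 := cyclotomic_eval_ne_zero η hη hn
  have hJ0 : J ≠ 0 := by
    rw [hJdef, Ne, Ideal.zero_eq_bot, Ideal.span_singleton_eq_bot]
    exact hΦ0
  -- there is a factor with multiplicity one not containing `n`
  have hex : ∃ π ∈ (normalizedFactors J).toFinset.filter
      (fun π => (normalizedFactors J).count π = 1), (n : 𝓞 K) ∉ π := by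
    by_contra hall
    push_neg at hall
    have hdvd : squarefreePart J ∣ span {((n : ℕ) : 𝓞 K)} := by
      rw [squarefreePart]
      refine Finset.prod_primes_dvd _ (fun π hπ =>
        prime_of_normalized_factor π (Multiset.mem_toFinset.mp (Finset.mem_filter.mp hπ).1))
        (fun π hπ => ?_)
      rw [Ideal.dvd_iff_le, Ideal.span_singleton_le_iff_mem]
      exact hall π hπ
    have hnorm : Ideal.absNorm (span {((n : ℕ) : 𝓞 K)}) = n ^ Module.finrank ℚ K := by
      rw [Ideal.absNorm_span_singleton]
      have hcast : ((n : ℕ) : 𝓞 K) = algebraMap ℤ (𝓞 K) (n : ℤ) := by simp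
      rw [hcast, Algebra.norm_algebraMap_of_basis (Module.Free.chooseBasis ℤ (𝓞 K)),
        ← Module.finrank_eq_card_chooseBasisIndex, NumberField.RingOfIntegers.rank]
      simp [Int.natAbs_pow]
    have hle : Ideal.absNorm (squarefreePart J) ≤ n ^ Module.finrank ℚ K := by
      rw [← hnorm]
      exact Nat.le_of_dvd (by rw [hnorm]; exact pow_pos hn _)
        (Ideal.absNorm_dvd_absNorm_of_le (Ideal.le_of_dvd hdvd))
    exact absurd hlt (not_lt.mpr hle)
  obtain ⟨π, hπmem, hnmem⟩ := hex
  obtain ⟨hπfac, hcount⟩ := Finset.mem_filter.mp hπmem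
  have hπfac' := Multiset.mem_toFinset.mp hπfac
  have hπprime : Prime π := prime_of_normalized_factor π hπfac'
  have hπIsPrime : π.IsPrime := Ideal.isPrime_of_prime hπprime
  have hπbot : π ≠ ⊥ := by rw [← Ideal.zero_eq_bot]; exact hπprime.ne_zero
  have hdvdJ : π ∣ J := dvd_of_mem_normalizedFactors hπfac'
  refine ⟨π, hπIsPrime, hπbot, (Ideal.le_of_dvd hdvdJ) (Ideal.mem_span_singleton_self _),
    ?_, hnmem⟩
  intro hmem2
  have h2 : π ^ 2 ∣ J := by
    rw [Ideal.dvd_iff_le, hJdef]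
    exact (Ideal.span_singleton_le_iff_mem _).mpr hmem2
  rw [pow_dvd_iff_le_emultiplicity,
    emultiplicity_eq_count_normalizedFactors hπprime.irreducible hJ0, normalize_eq,
    hcount] at h2
  exact absurd h2 (by norm_num)

end Aux

/-- Let `K` be a number field of degree `d` and `η` a unit of `𝓞 K` which is not a root of
unity.  Writing `U'ₙ` for the squarefree part of the ideal `(Φₙ(η))`, for every `x > 0` the
number of non-Wieferich prime ideals of norm at most `x` with respect to `η` is at least the
number of integers `n ≥ 1` with `|N_{K/ℚ}(Φₙ(η))| ≤ x` and `N(U'ₙ) > n ^ d`. -/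
theorem nonWieferich_count_ge_of_squarefreePart (K : Type*) [Field K] [NumberField K]
    (η : (𝓞 K)ˣ) (hη : ∀ m : ℕ, 0 < m → (η : 𝓞 K) ^ m ≠ 1) (x : ℝ) (hx : 0 < x) :
    {n : ℕ | 1 ≤ n ∧
        (|Algebra.norm ℤ ((Polynomial.cyclotomic n (𝓞 K)).eval (η : 𝓞 K))| : ℝ) ≤ x ∧
        n ^ Module.finrank ℚ K <
          Ideal.absNorm (squarefreePart
            (Ideal.span {(Polynomial.cyclotomic n (𝓞 K)).eval (η : 𝓞 K)}))}.ncard ≤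
      {π : Ideal (𝓞 K) | π.IsPrime ∧ (Ideal.absNorm π : ℝ) ≤ x ∧ IsNonWieferich η π}.ncard := by
  classical
  set T : Set (Ideal (𝓞 K)) :=
    {π : Ideal (𝓞 K) | π.IsPrime ∧ (Ideal.absNorm π : ℝ) ≤ x ∧ IsNonWieferich η π} with hTdef
  have hTfin : T.Finite := by
    refine (Ideal.finite_setOf_absNorm_le ⌊x⌋₊).subset ?_
    rintro π ⟨-, hle, -⟩
    exact Nat.le_floor hle
  set f : ℕ → Ideal (𝓞 K) := fun n =>
    if h : ∃ π, GoodPrime η n π then h.choose else ⊥ with hfdef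
  have hgood : ∀ n : ℕ, 1 ≤ n →
      (|Algebra.norm ℤ ((Polynomial.cyclotomic n (𝓞 K)).eval (η : 𝓞 K))| : ℝ) ≤ x →
      n ^ Module.finrank ℚ K <
        Ideal.absNorm (squarefreePart
          (Ideal.span {(Polynomial.cyclotomic n (𝓞 K)).eval (η : 𝓞 K)})) →
      GoodPrime η n (f n) := by
    intro n h1 _ h3
    have hex := exists_goodPrime η hη h1 h3
    rw [hfdef]
    simp only [dif_pos hex]
    exact hex.choose_spec
  refine Set.ncard_le_ncard_of_injOn f ?_ ?_ hTfin
  · rintro n ⟨h1, h2, h3⟩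
    have hg := hgood n h1 h2 h3
    obtain ⟨hnw, hdvd⟩ := goodPrime_spec η hη h1 hg
    refine ⟨hg.1, ?_, hnw⟩
    have hΦ0 : (Polynomial.cyclotomic n (𝓞 K)).eval (η : 𝓞 K) ≠ 0 :=
      cyclotomic_eval_ne_zero η hη h1
    have hJnorm : Ideal.absNorm (Ideal.span {(Polynomial.cyclotomic n (𝓞 K)).eval (η : 𝓞 K)})
        = (Algebra.norm ℤ ((Polynomial.cyclotomic n (𝓞 K)).eval (η : 𝓞 K))).natAbs :=
      Ideal.absNorm_span_singleton _
    have hJne : Ideal.absNorm (Ideal.span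
        {(Polynomial.cyclotomic n (𝓞 K)).eval (η : 𝓞 K)}) ≠ 0 := by
      rw [Ne, Ideal.absNorm_eq_zero_iff, Ideal.span_singleton_eq_bot]
      exact hΦ0
    have hle : Ideal.absNorm (f n) ≤
        (Algebra.norm ℤ ((Polynomial.cyclotomic n (𝓞 K)).eval (η : 𝓞 K))).natAbs := by
      rw [← hJnorm]
      exact Nat.le_of_dvd (Nat.pos_of_ne_zero hJne) hdvd
    calc (Ideal.absNorm (f n) : ℝ)
        ≤ ((Algebra.norm ℤ ((Polynomial.cyclotomic n (𝓞 K)).eval (η : 𝓞 K))).natAbs : ℝ) := by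
          exact_mod_cast hle
      _ = (|Algebra.norm ℤ ((Polynomial.cyclotomic n (𝓞 K)).eval (η : 𝓞 K))| : ℝ) := by
          rw [Nat.cast_natAbs, Int.cast_abs]
      _ ≤ x := h2
  · rintro n ⟨h1, h2, h3⟩ m ⟨h1', h2', h3'⟩ hfe
    have hgn := hgood n h1 h2 h3
    have hgm := hgood m h1' h2' h3'
    rw [hfe] at hgn
    rw [← goodPrime_orderOf hgn, goodPrime_orderOf hgm]
end
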